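/- Let G(z,t) = exp[−(εt/(2h))(z−1)(z−3) + (t/h²)(z−1)²]. Then ∂G/∂z at z = 1 equals εt/h, and ∂²G/∂z² at z = 1 equals (εt/h)² − εt/h + 2t/h². Consequently the mean of the distribution u_j(t) is μ_j = εt/h and the variance is σ_j² = 2t/h², so in physical coordinates the mean location is εt and the variance is 2t, exactly matching the advection-diffusion PDE for all time. -/

import Mathlib

/-- The moment generating function of the second-order upwind scheme. -/
noncomputable def mgf (ε h z t : ℝ) : ℝ :=
  Real.exp (-(ε * t / (2 * h)) * (z - 1) * (z - 3) + t / h ^ 2 * (z - 1) ^ 2)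

lemma mgf_hasDerivAt (ε h t z : ℝ) :
    HasDerivAt (fun z => mgf ε h z t)
      (mgf ε h z t * (-(ε * t / (2 * h)) * (2 * z - 4) + t / h ^ 2 * (2 * z - 2))) z := by
  have hP : HasDerivAt (fun z : ℝ => -(ε * t / (2 * h)) * (z - 1) * (z - 3) + t / h ^ 2 * (z - 1) ^ 2)
      (-(ε * t / (2 * h)) * (2 * z - 4) + t / h ^ 2 * (2 * z - 2)) z := by
    have h1 : HasDerivAt (fun z : ℝ => -(ε * t / (2 * h)) * (z - 1) * (z - 3))
        (-(ε * t / (2 * h)) * 1 * (z - 3) + -(ε * t / (2 * h)) * (z - 1) * 1) z :=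
      ((((hasDerivAt_id z).sub_const 1).const_mul (-(ε * t / (2 * h)))).mul
        ((hasDerivAt_id z).sub_const 3))
    have h2 : HasDerivAt (fun z : ℝ => t / h ^ 2 * (z - 1) ^ 2)
        (t / h ^ 2 * (2 * (z - 1) ^ 1 * 1)) z :=
      (((hasDerivAt_id z).sub_const 1).pow 2).const_mul (t / h ^ 2)
    refine (h1.fun_add h2).congr_deriv ?_
    ring
  simpa [mgf, mul_comm] using hP.exp

/-- `G_z(1,t) = εt/h`, `G_zz(1,t) = (εt/h)² − εt/h + 2t/h²`; hence the mean
`μ_j = G_z(1,t)` is `εt/h`, the variance `σ_j² = G_zz + G_z − G_z²` is `2t/h²`,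
and in physical coordinates the mean is `εt` and the variance is `2t`. -/
theorem mgf_mean_variance (ε h : ℝ) (hε : 0 < ε) (hh : 0 < h) (t : ℝ) :
    deriv (fun z => mgf ε h z t) 1 = ε * t / h ∧
    iteratedDeriv 2 (fun z => mgf ε h z t) 1 = (ε * t / h) ^ 2 - ε * t / h + 2 * t / h ^ 2 ∧
    iteratedDeriv 2 (fun z => mgf ε h z t) 1 + deriv (fun z => mgf ε h z t) 1
        - (deriv (fun z => mgf ε h z t) 1) ^ 2 = 2 * t / h ^ 2 ∧
    h * deriv (fun z => mgf ε h z t) 1 = ε * t ∧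
    h ^ 2 * (iteratedDeriv 2 (fun z => mgf ε h z t) 1 + deriv (fun z => mgf ε h z t) 1
        - (deriv (fun z => mgf ε h z t) 1) ^ 2) = 2 * t := by
  have hh0 : h ≠ 0 := hh.ne'
  have hm1 : mgf ε h 1 t = 1 := by simp [mgf]
  have hd1 : deriv (fun z => mgf ε h z t) 1 = ε * t / h := by
    rw [(mgf_hasDerivAt ε h t 1).deriv, hm1]
    field_simp
    ring
  have hderiv_eq : deriv (fun z => mgf ε h z t)
      = fun z => mgf ε h z t * (-(ε * t / (2 * h)) * (2 * z - 4) + t / h ^ 2 * (2 * z - 2)) :=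
    funext fun z => (mgf_hasDerivAt ε h t z).deriv
  have hd2 : iteratedDeriv 2 (fun z => mgf ε h z t) 1
      = (ε * t / h) ^ 2 - ε * t / h + 2 * t / h ^ 2 := by
    rw [iteratedDeriv_succ, iteratedDeriv_one, hderiv_eq]
    have hQ : HasDerivAt (fun z : ℝ => -(ε * t / (2 * h)) * (2 * z - 4) + t / h ^ 2 * (2 * z - 2))
        (-(ε * t / (2 * h)) * 2 + t / h ^ 2 * 2) 1 := by
      have h1 : HasDerivAt (fun z : ℝ => 2 * z - 4) 2 1 := by
        simpa using ((hasDerivAt_id (1:ℝ)).const_mul 2).sub_const 4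
      have h2 : HasDerivAt (fun z : ℝ => 2 * z - 2) 2 1 := by
        simpa using ((hasDerivAt_id (1:ℝ)).const_mul 2).sub_const 2
      simpa [mul_comm] using (h1.const_mul (-(ε * t / (2 * h)))).fun_add (h2.const_mul (t / h ^ 2))
    rw [((mgf_hasDerivAt ε h t 1).fun_mul hQ).deriv, hm1]
    field_simp
    ring
  refine ⟨hd1, hd2, ?_, ?_, ?_⟩
  · rw [hd1, hd2]; ring
  · rw [hd1]; field_simp
  · rw [hd1, hd2]; field_simp; ring
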